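/- Let 0 < Ω₀ ≤ 4/√π. Then the function ρ^TF(x) = 1/π − (Ω₀²/16)(1 − 2|x|²) is nonnegative on B₁ with ∫_{B₁}ρ^TF = 1, the Thomas–Fermi functional satisfies E^TF[ρ] ≥ E^TF[ρ^TF] for every ρ ∈ L²(B₁) with ρ ≥ 0 a.e. and ∫_{B₁}ρ = 1, with equality if and only if ρ = ρ^TF a.e., and the minimum value is E^TF = 1/π − Ω₀²/8 − πΩ₀⁴/768. -/

import Mathlib

open MeasureTheory Real Filter

noncomputable section

/-- Points of the plane. -/
abbrev Pt : Type := EuclideanSpace ℝ (Fin 2)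

/-- The open unit disc. -/
def B1 : Set Pt := Metric.ball 0 1

/-- First partial derivative of a complex-valued function. -/
def pd1 (Ψ : Pt → ℂ) (x : Pt) : ℂ := fderiv ℝ Ψ x (EuclideanSpace.single 0 1)

/-- Second partial derivative of a complex-valued function. -/
def pd2 (Ψ : Pt → ℂ) (x : Pt) : ℂ := fderiv ℝ Ψ x (EuclideanSpace.single 1 1)

/-- Angular momentum operator `L = -i (x₁ ∂₂ - x₂ ∂₁)`. -/
def angMom (Ψ : Pt → ℂ) (x : Pt) : ℂ :=
  -Complex.I * ((x 0 : ℂ) * pd2 Ψ x - (x 1 : ℂ) * pd1 Ψ x)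

/-- The Gross-Pitaevskii energy density `|∇Ψ|² - Ω conj(Ψ) LΨ + |Ψ|⁴/ε²`. -/
def gpDensity (ε Ω : ℝ) (Ψ : Pt → ℂ) (x : Pt) : ℝ :=
  ‖pd1 Ψ x‖ ^ 2 + ‖pd2 Ψ x‖ ^ 2
    - Ω * (starRingEnd ℂ (Ψ x) * angMom Ψ x).re
    + ‖Ψ x‖ ^ 4 / ε ^ 2

/-- The Gross-Pitaevskii functional on the unit disc. -/
def gpEnergy (ε Ω : ℝ) (Ψ : Pt → ℂ) : ℝ := ∫ x in B1, gpDensity ε Ω Ψ x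

/-- Admissible (H¹, normalized) wave functions. -/
def gpAdm (Ψ : Pt → ℂ) : Prop :=
  DifferentiableOn ℝ Ψ B1 ∧
  IntegrableOn (fun x => ‖Ψ x‖ ^ 2) B1 ∧
  IntegrableOn (fun x => ‖pd1 Ψ x‖ ^ 2 + ‖pd2 Ψ x‖ ^ 2) B1 ∧
  IntegrableOn (fun x => ‖Ψ x‖ ^ 4) B1 ∧
  IntegrableOn (fun x => (starRingEnd ℂ (Ψ x) * angMom Ψ x).re) B1 ∧
  (∫ x in B1, ‖Ψ x‖ ^ 2) = 1

/-- The GP ground-state energy: infimum of the functional over normalized functions. -/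
def gpGround (ε Ω : ℝ) : ℝ := sInf {E | ∃ Ψ : Pt → ℂ, gpAdm Ψ ∧ E = gpEnergy ε Ω Ψ}

/-- A GP minimizer: a normalized admissible function attaining the infimum. -/
def IsGPMinimizer (ε Ω : ℝ) (Ψ : Pt → ℂ) : Prop :=
  gpAdm Ψ ∧ gpEnergy ε Ω Ψ = gpGround ε Ω

/-- The Thomas-Fermi functional. -/
def tfEnergy (Ω₀ : ℝ) (ρ : Pt → ℝ) : ℝ :=
  ∫ x in B1, ((ρ x) ^ 2 - Ω₀ ^ 2 * ‖x‖ ^ 2 * ρ x / 4)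

/-- Admissible TF densities: nonnegative, in L²(B₁), of total mass one. -/
def tfAdm (ρ : Pt → ℝ) : Prop :=
  IntegrableOn ρ B1 ∧ IntegrableOn (fun x => (ρ x) ^ 2) B1 ∧
  (∀ᵐ x ∂(volume.restrict B1), 0 ≤ ρ x) ∧ (∫ x in B1, ρ x) = 1

/-- The TF ground-state energy. -/
def tfGround (Ω₀ : ℝ) : ℝ := sInf {E | ∃ ρ : Pt → ℝ, tfAdm ρ ∧ E = tfEnergy Ω₀ ρ}

/-- Radius of the TF "hole". -/
def R0 (Ω₀ : ℝ) : ℝ := Real.sqrt (1 - 4 / (Real.sqrt π * Ω₀))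

/-- The TF minimizer. -/
def rhoTF (Ω₀ : ℝ) (x : Pt) : ℝ :=
  if Ω₀ ≤ 4 / Real.sqrt π then 1 / π - Ω₀ ^ 2 / 16 * (1 - 2 * ‖x‖ ^ 2)
  else max 0 (Ω₀ ^ 2 / 8 * (‖x‖ ^ 2 - 1) + Ω₀ / (2 * Real.sqrt π))

lemma volB1 : (volume B1).toReal = π := by
  have h := EuclideanSpace.volume_ball (Fin 2) (0 : Pt) 1
  simp only [Fintype.card_fin] at h
  have h2 : ((2:ℕ):ℝ)/2 + 1 = 2 := by norm_num
  rw [h2, Real.Gamma_two] at h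
  rw [B1, h]
  simp [sq_sqrt Real.pi_nonneg, Real.pi_nonneg]

lemma int_pow (k : ℕ) : ∫ x in B1, ‖x‖ ^ k = 2 * π / (k + 2) := by
  have h := MeasureTheory.integral_fun_norm_addHaar (volume : Measure Pt)
      (fun y : ℝ => if y < 1 then y ^ k else (0:ℝ))
  rw [finrank_euclideanSpace_fin] at h
  have hL : ∫ x : Pt, (if ‖x‖ < 1 then ‖x‖ ^ k else (0:ℝ)) = ∫ x in B1, ‖x‖ ^ k := by
    rw [← MeasureTheory.integral_indicator (show MeasurableSet B1 from measurableSet_ball)]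
    congr 1
    ext x
    simp [B1, Set.indicator, mem_ball_zero_iff]
  have hR : ∫ y in Set.Ioi (0:ℝ), y ^ (2-1) • (if y < 1 then y ^ k else (0:ℝ))
      = 1 / (k + 2) := by
    have : ∀ y : ℝ, y ^ (2-1) • (if y < 1 then y ^ k else (0:ℝ))
        = Set.indicator (Set.Iio 1) (fun y => y ^ (k+1)) y := by
      intro y
      by_cases hy : y < 1 <;> simp [Set.indicator, hy, smul_eq_mul, pow_succ, mul_comm]
    simp only [this]
    rw [MeasureTheory.setIntegral_indicator measurableSet_Iio, Set.Ioi_inter_Iio,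
      ← MeasureTheory.integral_Ioc_eq_integral_Ioo,
      ← intervalIntegral.integral_of_le (zero_le_one), integral_pow]
    push_cast
    ring
  rw [hL, hR, show Metric.ball (0:Pt) 1 = B1 from rfl, measureReal_def, volB1] at h
  rw [h, nsmul_eq_mul, smul_eq_mul]
  push_cast
  ring

lemma contInt {f : Pt → ℝ} (hf : Continuous f) : IntegrableOn f B1 :=
  (hf.continuousOn.integrableOn_compact (isCompact_closedBall 0 1)).mono_set
    Metric.ball_subset_closedBall

lemma mulInt {ρ : Pt → ℝ} (hρ : IntegrableOn ρ B1) :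
    IntegrableOn (fun x => ‖x‖ ^ 2 * ρ x) B1 := by
  have hg : IntegrableOn (fun x => (min (‖x‖ ^ 2) 1) * ρ x) B1 := by
    refine hρ.bdd_mul (c := 1) ?_ (ae_of_all _ (fun x => ?_))
    · exact ((continuous_norm.pow 2).min continuous_const).aestronglyMeasurable
    · rw [Real.norm_eq_abs, abs_of_nonneg (le_min (sq_nonneg _) zero_le_one)]
      exact min_le_right _ _
  refine hg.congr_fun (fun x hx => ?_) (show MeasurableSet B1 from measurableSet_ball)
  have : ‖x‖ < 1 := mem_ball_zero_iff.mp hx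
  show min (‖x‖ ^ 2) 1 * ρ x = ‖x‖ ^ 2 * ρ x
  rw [min_eq_left (by nlinarith [norm_nonneg x])]

/-- the TF minimizer as a named function -/
def r0f (Ω₀ : ℝ) (x : Pt) : ℝ := 1 / π - Ω₀ ^ 2 / 16 * (1 - 2 * ‖x‖ ^ 2)

lemma r0f_cont (Ω₀ : ℝ) : Continuous (r0f Ω₀) := by
  unfold r0f; fun_prop

lemma sqInt (Ω₀ : ℝ) {ρ : Pt → ℝ} (h₁ : IntegrableOn ρ B1)
    (h₂ : IntegrableOn (fun x => ρ x ^ 2) B1) :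
    IntegrableOn (fun x => (ρ x - r0f Ω₀ x) ^ 2) B1 := by
  have he : (fun x => (ρ x - r0f Ω₀ x) ^ 2)
      = fun x => (ρ x ^ 2 - (2 * (1/π - Ω₀^2/16)) * ρ x - (Ω₀^2/4) * (‖x‖^2 * ρ x))
          + (r0f Ω₀ x) ^ 2 := by
    funext x; unfold r0f; ring
  rw [he]
  exact ((h₂.sub (h₁.const_mul _)).sub ((mulInt h₁).const_mul _)).add
    (contInt ((r0f_cont Ω₀).pow 2))

lemma int_r0f (Ω₀ : ℝ) : (∫ x in B1, r0f Ω₀ x) = 1 := by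
  have he : (fun x : Pt => r0f Ω₀ x)
      = fun x => (1/π - Ω₀^2/16) + (Ω₀^2/8) * ‖x‖^2 := by
    funext x; unfold r0f; ring
  have hfin : volume B1 ≠ ⊤ := by rw [B1]; exact measure_ball_lt_top.ne
  have hI1 : IntegrableOn (fun _ : Pt => (1/π - Ω₀^2/16)) B1 :=
    (integrableOn_const_iff).mpr (Or.inr (lt_top_iff_ne_top.mpr hfin))
  have hI2 : IntegrableOn (fun x : Pt => (Ω₀^2/8) * ‖x‖^2) B1 :=
    (contInt (continuous_norm.pow 2)).const_mul _
  rw [he, MeasureTheory.integral_add hI1 hI2, MeasureTheory.setIntegral_const,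
    MeasureTheory.integral_const_mul, measureReal_def, volB1, int_pow 2, smul_eq_mul]
  push_cast
  field_simp
  ring

lemma int_r0f_sq (Ω₀ : ℝ) : (∫ x in B1, (r0f Ω₀ x) ^ 2)
    = (1/π - Ω₀^2/16)^2 * π + (1/π - Ω₀^2/16) * Ω₀^2 * π / 8 + Ω₀^4 * π / 192 := by
  have he : (fun x : Pt => (r0f Ω₀ x) ^ 2)
      = fun x => ((1/π - Ω₀^2/16)^2 + ((1/π - Ω₀^2/16) * Ω₀^2/4) * ‖x‖^2)
          + (Ω₀^4/64) * ‖x‖^4 := by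
    funext x; unfold r0f; ring
  have hfin : volume B1 ≠ ⊤ := by rw [B1]; exact measure_ball_lt_top.ne
  have hI1 : IntegrableOn (fun _ : Pt => (1/π - Ω₀^2/16)^2) B1 :=
    (integrableOn_const_iff).mpr (Or.inr (lt_top_iff_ne_top.mpr hfin))
  have hI2 : IntegrableOn (fun x : Pt => ((1/π - Ω₀^2/16) * Ω₀^2/4) * ‖x‖^2) B1 :=
    (contInt (continuous_norm.pow 2)).const_mul _
  have hI3 : IntegrableOn (fun x : Pt => (Ω₀^4/64) * ‖x‖^4) B1 :=
    (contInt (continuous_norm.pow 4)).const_mul _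
  have hI12 : IntegrableOn
      (fun x : Pt => (1/π - Ω₀^2/16)^2 + ((1/π - Ω₀^2/16) * Ω₀^2/4) * ‖x‖^2) B1 :=
    hI1.add hI2
  rw [he, MeasureTheory.integral_add hI12 hI3, MeasureTheory.integral_add hI1 hI2,
    MeasureTheory.setIntegral_const, MeasureTheory.integral_const_mul,
    MeasureTheory.integral_const_mul, measureReal_def, volB1, int_pow 2, int_pow 4, smul_eq_mul]
  push_cast
  field_simp
  ring

lemma key (Ω₀ : ℝ) (ρ : Pt → ℝ) (h₁ : IntegrableOn ρ B1)
    (h₂ : IntegrableOn (fun x => ρ x ^ 2) B1) (h₃ : (∫ x in B1, ρ x) = 1) :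
    tfEnergy Ω₀ ρ = (1/π - Ω₀^2/8 - π * Ω₀^4/768) + ∫ x in B1, (ρ x - r0f Ω₀ x) ^ 2 := by
  set c : ℝ := 1/π - Ω₀^2/16 with hc
  have he : (fun x : Pt => (ρ x) ^ 2 - Ω₀ ^ 2 * ‖x‖ ^ 2 * ρ x / 4)
      = fun x => ((ρ x - r0f Ω₀ x) ^ 2 + (2*c) * ρ x) - (r0f Ω₀ x) ^ 2 := by
    funext x; unfold r0f; rw [hc]; ring
  have hA : IntegrableOn (fun x => (ρ x - r0f Ω₀ x) ^ 2 + (2*c) * ρ x) B1 :=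
    (sqInt Ω₀ h₁ h₂).add (h₁.const_mul _)
  rw [tfEnergy, he, MeasureTheory.integral_sub hA (contInt (f := fun x => r0f Ω₀ x ^ 2) ((r0f_cont Ω₀).pow 2)),
    MeasureTheory.integral_add (sqInt Ω₀ h₁ h₂) (h₁.const_mul _),
    MeasureTheory.integral_const_mul, h₃, int_r0f_sq, hc]
  have hπ : (π:ℝ) ≠ 0 := Real.pi_ne_zero
  field_simp
  ring

theorem stmt6 (Ω₀ : ℝ) (h1 : 0 < Ω₀) (h2 : Ω₀ ≤ 4 / Real.sqrt π) :
    (∀ x ∈ B1, 0 ≤ 1 / π - Ω₀ ^ 2 / 16 * (1 - 2 * ‖x‖ ^ 2)) ∧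
    (∫ x in B1, (1 / π - Ω₀ ^ 2 / 16 * (1 - 2 * ‖x‖ ^ 2))) = 1 ∧
    (∀ ρ : Pt → ℝ, tfAdm ρ →
      tfEnergy Ω₀ (fun x => 1 / π - Ω₀ ^ 2 / 16 * (1 - 2 * ‖x‖ ^ 2)) ≤ tfEnergy Ω₀ ρ ∧
      (tfEnergy Ω₀ ρ = tfEnergy Ω₀ (fun x => 1 / π - Ω₀ ^ 2 / 16 * (1 - 2 * ‖x‖ ^ 2)) ↔
        ρ =ᵐ[volume.restrict B1] fun x => 1 / π - Ω₀ ^ 2 / 16 * (1 - 2 * ‖x‖ ^ 2))) ∧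
    tfEnergy Ω₀ (fun x => 1 / π - Ω₀ ^ 2 / 16 * (1 - 2 * ‖x‖ ^ 2)) =
      1 / π - Ω₀ ^ 2 / 8 - π * Ω₀ ^ 4 / 768 := by
  have hr0 : (fun x : Pt => 1 / π - Ω₀ ^ 2 / 16 * (1 - 2 * ‖x‖ ^ 2)) = r0f Ω₀ := rfl
  have hq : Ω₀ ^ 2 * π ≤ 16 := by
    have hs : Real.sqrt π > 0 := Real.sqrt_pos.mpr Real.pi_pos
    have h2' : Ω₀ * Real.sqrt π ≤ 4 := by
      rw [div_eq_mul_inv] at h2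
      calc Ω₀ * Real.sqrt π ≤ (4 * (Real.sqrt π)⁻¹) * Real.sqrt π :=
            mul_le_mul_of_nonneg_right h2 hs.le
        _ = 4 := by field_simp
    have := mul_le_mul h2' h2' (by positivity) (by norm_num)
    have hss : Real.sqrt π * Real.sqrt π = π := Real.mul_self_sqrt Real.pi_nonneg
    nlinarith
  have hval : tfEnergy Ω₀ (r0f Ω₀) = 1 / π - Ω₀ ^ 2 / 8 - π * Ω₀ ^ 4 / 768 := by
    rw [key Ω₀ (r0f Ω₀) (contInt (r0f_cont Ω₀)) (contInt ((r0f_cont Ω₀).pow 2)) (int_r0f Ω₀)]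
    simp
  refine ⟨?_, int_r0f Ω₀, ?_, by rw [hr0]; exact hval⟩
  · intro x _
    have ht : (0:ℝ) ≤ ‖x‖ ^ 2 := sq_nonneg _
    have h16 : Ω₀ ^ 2 / 16 * (1 - 2 * ‖x‖ ^ 2) ≤ Ω₀ ^ 2 / 16 := by nlinarith [sq_nonneg Ω₀]
    have hle : Ω₀ ^ 2 / 16 ≤ 1 / π := by
      rw [div_le_div_iff₀ (by norm_num) Real.pi_pos]
      linarith
    linarith
  · intro ρ hadm
    obtain ⟨hi1, hi2, _, hmass⟩ := hadm
    have hkey := key Ω₀ ρ hi1 hi2 hmass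
    have hsqInt := sqInt Ω₀ hi1 hi2
    have hnn : (0:ℝ) ≤ ∫ x in B1, (ρ x - r0f Ω₀ x) ^ 2 :=
      MeasureTheory.setIntegral_nonneg (show MeasurableSet B1 from measurableSet_ball)
        (fun x _ => sq_nonneg _)
    rw [hr0]
    constructor
    · rw [hval]; linarith
    · rw [hval]
      constructor
      · intro heq
        have hz : (∫ x in B1, (ρ x - r0f Ω₀ x) ^ 2) = 0 := by linarith
        have hae : (fun x => (ρ x - r0f Ω₀ x) ^ 2) =ᵐ[volume.restrict B1] 0 :=
          (MeasureTheory.integral_eq_zero_iff_of_nonneg (fun x => sq_nonneg _) hsqInt).mp hz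
        filter_upwards [hae] with x hx
        have : ρ x - r0f Ω₀ x = 0 := (pow_eq_zero_iff two_ne_zero).mp hx
        have hx0 : ρ x = r0f Ω₀ x := by linarith
        simpa [r0f] using hx0
      · intro hae
        have h1' : (fun x => (ρ x) ^ 2 - Ω₀ ^ 2 * ‖x‖ ^ 2 * ρ x / 4)
            =ᵐ[volume.restrict B1]
            (fun x => (r0f Ω₀ x) ^ 2 - Ω₀ ^ 2 * ‖x‖ ^ 2 * r0f Ω₀ x / 4) := by
          filter_upwards [hae] with x hx
          have hx' : ρ x = r0f Ω₀ x := hx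
          rw [hx']
        rw [← hval]
        exact MeasureTheory.integral_congr_ae h1'
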